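/- arXiv:2508.18280 — 4 statements merged into one kernel-verified Lean document; each statement's English description precedes it below -/
import Mathlib

section
/- Let q ≥ 1, x_1,…,x_q ∈ ℂ, and 1 ≤ r < q. Then ∑_{s=1}^{q} (-1)^{s-1} ∑_{1 ≤ k_1 < ⋯ < k_s ≤ q} ∑_{j_{k_1},…,j_{k_s} ≥ 0, j_{k_1}+⋯+j_{k_s} = r} ( (2r)! / ((2j_{k_1})! ⋯ (2j_{k_s})!) ) · x_{k_1}^{j_{k_1}} ⋯ x_{k_s}^{j_{k_s}} = 0. -/
open Finset

lemma aux_superset_sum {q : ℕ} (S : Finset (Fin q)) (hS : S.Nonempty) (hSne : S ≠ univ) :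
    ∑ A ∈ (univ : Finset (Fin q)).powerset.filter (fun A => S ⊆ A),
      (-1 : ℂ) ^ (A.card - 1) = 0 := by
  classical
  have h : ∑ A ∈ (univ : Finset (Fin q)).powerset.filter (fun A => S ⊆ A),
      (-1 : ℂ) ^ (A.card - 1)
      = ∑ B ∈ (univ \ S).powerset, (-1 : ℂ) ^ (B.card + S.card - 1) := by
    refine Finset.sum_nbij' (fun A => A \ S) (fun B => B ∪ S) ?_ ?_ ?_ ?_ ?_
    · intro A hA
      simp only [mem_filter, mem_powerset] at hA
      simpa [mem_powerset] using sdiff_subset_sdiff hA.1 (le_refl S)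
    · intro B hB
      simp only [mem_powerset] at hB
      simp only [mem_filter, mem_powerset]
      exact ⟨subset_univ _, subset_union_right⟩
    · intro A hA
      simp only [mem_filter, mem_powerset] at hA
      exact sdiff_union_of_subset hA.2
    · intro B hB
      simp only [mem_powerset] at hB
      have hd : Disjoint B S := disjoint_of_subset_left hB sdiff_disjoint
      show (B ∪ S) \ S = B
      ext a
      simp only [mem_sdiff, mem_union]
      constructor
      · rintro ⟨h1 | h1, h2⟩
        · exact h1
        · exact absurd h1 h2
      · intro ha
        exact ⟨Or.inl ha, fun hs => disjoint_left.mp hd ha hs⟩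
    · intro A hA
      simp only [mem_filter, mem_powerset] at hA
      show (-1 : ℂ) ^ (A.card - 1) = (-1 : ℂ) ^ ((A \ S).card + S.card - 1)
      rw [card_sdiff_of_subset hA.2, Nat.sub_add_cancel (card_le_card hA.2)]
  rw [h]
  have hcard : 1 ≤ S.card := card_pos.2 hS
  have hstep : ∀ B ∈ (univ \ S).powerset, (-1 : ℂ) ^ (B.card + S.card - 1)
      = (-1 : ℂ) ^ (S.card - 1) * (-1 : ℂ) ^ B.card := by
    intro B _
    rw [← pow_add]
    congr 1
    omega
  rw [Finset.sum_congr rfl hstep, ← Finset.mul_sum]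
  have hne : (univ \ S).Nonempty := by
    rw [sdiff_nonempty]
    intro hsub
    exact hSne (Finset.univ_subset_iff.mp hsub)
  have h1 := Finset.sum_powerset_neg_one_pow_card_of_nonempty hne
  have h2 : ∑ B ∈ (univ \ S).powerset, (-1 : ℂ) ^ B.card = 0 := by
    have := congrArg (fun z : ℤ => (z : ℂ)) h1
    push_cast at this
    simpa using this
  rw [h2, mul_zero]

/-- Lemma 1 (Ford–Zaharescu generalization): the alternating multinomial identity. -/
theorem stmt_0 (q r : ℕ) (hq : 1 ≤ q) (hr : 1 ≤ r) (hrq : r < q) (x : Fin q → ℂ) :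
    ∑ A ∈ (Finset.univ : Finset (Fin q)).powerset.filter (fun A => A.Nonempty),
      (-1 : ℂ) ^ (A.card - 1) *
        ∑ j ∈ Finset.piAntidiag A r,
          (((2 * r).factorial : ℂ) / ∏ k ∈ A, ((2 * j k).factorial : ℂ)) *
            ∏ k ∈ A, x k ^ (j k) = 0 := by
  classical
  set T := Finset.piAntidiag (univ : Finset (Fin q)) r with hT
  set c : (Fin q → ℕ) → ℂ := fun j =>
    (((2 * r).factorial : ℂ) / ∏ k ∈ (univ : Finset (Fin q)), ((2 * j k).factorial : ℂ)) *
      ∏ k ∈ (univ : Finset (Fin q)), x k ^ (j k) with hc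
  have step1 : ∀ A ∈ (Finset.univ : Finset (Fin q)).powerset.filter (fun A => A.Nonempty),
      (-1 : ℂ) ^ (A.card - 1) *
        ∑ j ∈ Finset.piAntidiag A r,
          (((2 * r).factorial : ℂ) / ∏ k ∈ A, ((2 * j k).factorial : ℂ)) *
            ∏ k ∈ A, x k ^ (j k)
      = ∑ j ∈ T, if (∀ i, j i ≠ 0 → i ∈ A) then (-1 : ℂ) ^ (A.card - 1) * c j else 0 := by
    intro A hA
    have hset : Finset.piAntidiag A r = T.filter (fun j => ∀ i, j i ≠ 0 → i ∈ A) := by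
      ext f
      rw [Finset.mem_piAntidiag, hT, mem_filter, Finset.mem_piAntidiag]
      constructor
      · rintro ⟨hsum, hsupp⟩
        have heq : ∑ i ∈ A, f i = ∑ i, f i :=
          Finset.sum_subset (subset_univ A) (fun i _ hi => by
            by_contra h; exact hi (hsupp i h))
        exact ⟨⟨by rw [← heq]; exact hsum, fun i _ => mem_univ i⟩, hsupp⟩
      · rintro ⟨⟨hsum, -⟩, hsupp⟩
        have heq : ∑ i ∈ A, f i = ∑ i, f i :=
          Finset.sum_subset (subset_univ A) (fun i _ hi => by
            by_contra h; exact hi (hsupp i h))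
        exact ⟨by rw [heq]; exact hsum, hsupp⟩
    rw [hset, Finset.mul_sum, Finset.sum_filter]
    refine Finset.sum_congr rfl fun j hj => ?_
    by_cases hsupp : ∀ i, j i ≠ 0 → i ∈ A
    · rw [if_pos hsupp, if_pos hsupp]
      congr 1
      have h1 : ∏ k ∈ A, ((2 * j k).factorial : ℂ)
          = ∏ k ∈ (univ : Finset (Fin q)), ((2 * j k).factorial : ℂ) :=
        Finset.prod_subset (subset_univ A) (fun i _ hi => by
          have : j i = 0 := by by_contra h; exact hi (hsupp i h)
          simp [this])
      have h2 : ∏ k ∈ A, x k ^ (j k) = ∏ k ∈ (univ : Finset (Fin q)), x k ^ (j k) :=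
        Finset.prod_subset (subset_univ A) (fun i _ hi => by
          have : j i = 0 := by by_contra h; exact hi (hsupp i h)
          simp [this])
      rw [hc, h1, h2]
    · rw [if_neg hsupp, if_neg hsupp]
  rw [Finset.sum_congr rfl step1, Finset.sum_comm]
  refine Finset.sum_eq_zero fun j hj => ?_
  have hjsum : ∑ i, j i = r := by
    rw [hT, Finset.mem_piAntidiag] at hj
    exact hj.1
  set S : Finset (Fin q) := univ.filter (fun i => j i ≠ 0) with hS
  have hcond : ∀ A : Finset (Fin q), (∀ i, j i ≠ 0 → i ∈ A) ↔ S ⊆ A := by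
    intro A
    constructor
    · intro h i hi
      rw [hS, mem_filter] at hi
      exact h i hi.2
    · intro h i hi
      exact h (by rw [hS, mem_filter]; exact ⟨mem_univ i, hi⟩)
  have hSne : S.Nonempty := by
    by_contra h
    rw [not_nonempty_iff_eq_empty] at h
    have hz : ∀ i, j i = 0 := by
      intro i
      by_contra hi
      have : i ∈ S := by rw [hS, mem_filter]; exact ⟨mem_univ i, hi⟩
      simp [h] at this
    simp [hz] at hjsum
    omega
  have hScard : S.card < q := by
    have h1 : S.card ≤ ∑ i ∈ S, j i := by
      simpa using Finset.card_nsmul_le_sum S j 1 (fun i hi => by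
        rw [hS, mem_filter] at hi; omega)
    have h2 : ∑ i ∈ S, j i = r := by
      rw [← hjsum]
      exact Finset.sum_subset (subset_univ S) (fun i _ hi => by
        rw [hS, mem_filter] at hi
        push_neg at hi
        by_contra h
        exact h (hi (mem_univ i)))
    omega
  have hSneq : S ≠ univ := by
    intro h
    rw [h, card_univ, Fintype.card_fin] at hScard
    omega
  have hmain : ∑ A ∈ (Finset.univ : Finset (Fin q)).powerset.filter (fun A => A.Nonempty),
      (if (∀ i, j i ≠ 0 → i ∈ A) then (-1 : ℂ) ^ (A.card - 1) * c j else 0)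
      = ∑ A ∈ (univ : Finset (Fin q)).powerset.filter (fun A => S ⊆ A),
          (-1 : ℂ) ^ (A.card - 1) * c j := by
    rw [← Finset.sum_filter, Finset.filter_filter]
    apply Finset.sum_congr
    · apply Finset.filter_congr
      intro A _
      constructor
      · rintro ⟨-, h⟩
        exact (hcond A).mp h
      · intro h
        exact ⟨hSne.mono h, (hcond A).mpr h⟩
    · intro A _
      rfl
  rw [hmain, ← Finset.sum_mul, aux_superset_sum S hSne hSneq, zero_mul]
end

section
/- Let q ≥ 2, α_1,…,α_q ∈ ℂ, and 1 ≤ r < q. Then ∑_{s=1}^{q} 2^{q-s} (-1)^{s-1} ∑_{1 ≤ k_1 < ⋯ < k_s ≤ q} ∑_{ε_2,…,ε_s ∈ {-1,+1}} (α_{k_1} + ε_2 α_{k_2} + ⋯ + ε_s α_{k_s})^{2r} = 0. -/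
open Finset PowerSeries


lemma prod_rescale_exp {ι : Type*} (s : Finset ι) (c : ι → ℂ) :
    ∏ i ∈ s, rescale (c i) (exp ℂ) = rescale (∑ i ∈ s, c i) (exp ℂ) := by
  induction s using Finset.cons_induction with
  | empty => simp [rescale_zero]
  | cons a s ha ih => rw [prod_cons, ih, sum_cons, exp_mul_exp_eq_exp_add]

lemma key (q r : ℕ) (hr : 1 ≤ r) (hrq : r < q) (α : Fin q → ℂ) :
    ∑ S ∈ (univ : Finset (Fin q)).powerset, (2:ℂ)^(q - S.card) * (-1:ℂ)^S.card *
      ∑ ε ∈ S.pi (fun _ => ({-1,1} : Finset ℤ)),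
        (∑ k ∈ S.attach, (ε k.1 k.2 : ℂ) * α k.1)^(2*r) = 0 := by
  have hP : (∏ k : Fin q, (2 - rescale (α k) (exp ℂ) - rescale (-(α k)) (exp ℂ)))
      = ∑ S ∈ (univ : Finset (Fin q)).powerset, ∑ ε ∈ S.pi (fun _ => ({-1,1} : Finset ℤ)),
          C ((2:ℂ)^(q - S.card) * (-1:ℂ)^S.card) *
            rescale (∑ k ∈ S.attach, (ε k.1 k.2 : ℂ) * α k.1) (exp ℂ) := by
    have step1 : ∀ k : Fin q, (2 - rescale (α k) (exp ℂ) - rescale (-(α k)) (exp ℂ))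
        = (-(∑ e ∈ ({-1,1} : Finset ℤ), rescale ((e:ℂ) * α k) (exp ℂ))) + 2 := by
      intro k
      rw [Finset.sum_pair (by decide : (-1:ℤ) ≠ 1)]
      simp only [Int.cast_neg, Int.cast_one, neg_one_mul, one_mul]
      ring
    rw [Finset.prod_congr rfl (fun k _ => step1 k), Finset.prod_add]
    refine Finset.sum_congr rfl fun S hS => ?_
    have hneg : ∏ k ∈ S, (-(∑ e ∈ ({-1,1} : Finset ℤ), rescale ((e:ℂ) * α k) (exp ℂ)))
        = (-1:ℂ⟦X⟧)^S.card * ∏ k ∈ S, ∑ e ∈ ({-1,1} : Finset ℤ), rescale ((e:ℂ) * α k) (exp ℂ) := by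
      rw [← Finset.prod_const, ← Finset.prod_mul_distrib]
      simp [neg_one_mul]
    rw [hneg, Finset.prod_sum, Finset.prod_const]
    have hcard : (univ \ S).card = q - S.card := by
      rw [card_sdiff_of_subset (mem_powerset.mp hS), card_univ, Fintype.card_fin]
    rw [hcard, Finset.sum_congr rfl (fun p _ => prod_rescale_exp _ _), mul_sum, sum_mul]
    refine Finset.sum_congr rfl fun p _ => ?_
    have h2 : (2 : ℂ⟦X⟧) = C 2 := (map_ofNat (C) 2).symm
    have hm1 : (-1 : ℂ⟦X⟧) = C (-1) := by simp
    rw [h2, hm1, ← map_pow, ← map_pow, map_mul]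
    ring
  have hdvd : (X : ℂ⟦X⟧) ^ (2*q) ∣ ∏ k : Fin q, (2 - rescale (α k) (exp ℂ) - rescale (-(α k)) (exp ℂ)) := by
    have : ((X : ℂ⟦X⟧) ^ 2) ^ q ∣ ∏ k : Fin q, (2 - rescale (α k) (exp ℂ) - rescale (-(α k)) (exp ℂ)) := by
      have hX : ∏ _k : Fin q, ((X:ℂ⟦X⟧)^2) = ((X:ℂ⟦X⟧)^2)^q := by
        rw [Finset.prod_const, card_univ, Fintype.card_fin]
      rw [← hX]
      exact Finset.prod_dvd_prod_of_dvd _ _ fun k _ => by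
        rw [X_pow_dvd_iff]
        intro m hm
        have h2 : (2 : ℂ⟦X⟧) = C 2 := (map_ofNat (C) 2).symm
        rw [map_sub, map_sub, h2, coeff_C, coeff_rescale, coeff_rescale, coeff_exp]
        interval_cases m <;> simp [Nat.factorial] <;> ring
    rwa [← pow_mul] at this
  have hcoeff : coeff (2*r) (∏ k : Fin q, (2 - rescale (α k) (exp ℂ) - rescale (-(α k)) (exp ℂ))) = 0 := by
    rw [X_pow_dvd_iff] at hdvd
    exact hdvd _ (by omega)
  rw [hP] at hcoeff
  simp only [map_sum, coeff_C_mul, coeff_rescale, coeff_exp] at hcoeff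
  have hfac : (algebraMap ℚ ℂ) (1 / ((Nat.factorial (2*r)) : ℚ)) ≠ 0 := by
    simp [Nat.factorial_ne_zero]
  simp only [← mul_assoc, ← Finset.sum_mul] at hcoeff
  have h0 := (mul_eq_zero.mp hcoeff).resolve_right hfac
  simp only [Finset.mul_sum]
  exact h0

lemma sum_pi_insert {α : Type*} [DecidableEq α] {β : α → Type*} [∀ a, DecidableEq (β a)]
    {s : Finset α} {t : ∀ a, Finset (β a)} {a : α} (ha : a ∉ s)
    {M : Type*} [AddCommMonoid M] (F : (∀ x, x ∈ insert a s → β x) → M) :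
    ∑ p ∈ (insert a s).pi t, F p = ∑ b ∈ t a, ∑ p ∈ s.pi t, F (Pi.cons s a b p) := by
  have h₁ : ∀ x ∈ t a, ∀ y ∈ t a, x ≠ y →
      Disjoint (image (Pi.cons s a x) (pi s t)) (image (Pi.cons s a y) (pi s t)) := by
    intro x _ y _ h
    simp only [disjoint_iff_ne, mem_image]
    rintro _ ⟨p₂, _, eq₂⟩ _ ⟨p₃, _, eq₃⟩ eq
    have : Pi.cons s a x p₂ a (mem_insert_self _ _)
            = Pi.cons s a y p₃ a (mem_insert_self _ _) := by rw [eq₂, eq₃, eq]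
    rw [Pi.cons_same, Pi.cons_same] at this
    exact h this
  rw [pi_insert ha, sum_biUnion h₁]
  refine sum_congr rfl fun b _ => ?_
  exact sum_image fun p₁ _ p₂ _ eq => Pi.cons_injective ha eq

lemma sum_pi_neg {α : Type*} [DecidableEq α] {B : Finset α}
    {M : Type*} [AddCommMonoid M] (f : (∀ x, x ∈ B → ℤ) → M) :
    ∑ ε ∈ B.pi (fun _ => ({-1, 1} : Finset ℤ)), f ε
      = ∑ ε ∈ B.pi (fun _ => ({-1, 1} : Finset ℤ)), f (fun k hk => -(ε k hk)) := by
  refine Finset.sum_bij' (fun ε _ => fun k hk => -(ε k hk)) (fun ε _ => fun k hk => -(ε k hk))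
    ?_ ?_ ?_ ?_ ?_
  · intro ε hε
    rw [Finset.mem_pi] at hε ⊢
    intro k hk
    have := hε k hk
    simp only [mem_insert, mem_singleton] at this ⊢
    omega
  · intro ε hε
    rw [Finset.mem_pi] at hε ⊢
    intro k hk
    have := hε k hk
    simp only [mem_insert, mem_singleton] at this ⊢
    omega
  · intro ε _; funext k hk; simp
  · intro ε _; funext k hk; simp
  · intro ε _; simp

lemma attach_insert_sum {q : ℕ} (α : Fin q → ℂ) {a : Fin q} {B : Finset (Fin q)} (ha : a ∉ B)
    (b : ℤ) (ε : ∀ x, x ∈ B → ℤ) :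
    ∑ k ∈ (insert a B).attach, ((Pi.cons B a b ε k.1 k.2 : ℤ) : ℂ) * α k.1
      = (b : ℂ) * α a + ∑ k ∈ B.attach, ((ε k.1 k.2 : ℤ) : ℂ) * α k.1 := by
  rw [attach_insert, sum_insert (by
      simpa only [mem_image, mem_attach, Subtype.mk.injEq, true_and, Subtype.exists,
        exists_prop, exists_eq_right] using ha),
    sum_image (fun _ _ _ _ => Subtype.eq ∘ Subtype.mk.inj), Pi.cons_same]
  congr 1
  refine sum_congr rfl fun x _ => ?_
  rw [Pi.cons_ne (fun h => ha (by rw [h]; exact x.2))]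

/-- Lemma 2: alternating sum over signed combinations of the `α`'s raised to the `2r` power
vanishes.  A nonempty index set `{k_1 < ⋯ < k_s}` is encoded by its least element `a = k_1`
together with the set `B = {k_2, …, k_s}` of remaining (larger) indices. -/
theorem stmt_1 (q r : ℕ) (hq : 2 ≤ q) (hr : 1 ≤ r) (hrq : r < q) (α : Fin q → ℂ) :
    ∑ a : Fin q, ∑ B ∈ (Finset.univ.filter (fun k : Fin q => a < k)).powerset,
      (2 : ℂ) ^ (q - (B.card + 1)) * (-1) ^ B.card *
        ∑ ε ∈ B.pi (fun _ => ({-1, 1} : Finset ℤ)),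
          (α a + ∑ k ∈ B.attach, (ε k.1 k.2 : ℂ) * α k.1) ^ (2 * r) = 0 := by
  classical
  have key' := key q r hr hrq α
  have hemp : (∅ : Finset (Fin q)) ∈ (univ : Finset (Fin q)).powerset :=
    mem_powerset.mpr (empty_subset _)
  rw [← Finset.add_sum_erase _ _ hemp] at key'
  have h1 : ∑ S ∈ ((univ : Finset (Fin q)).powerset.erase ∅),
      (2:ℂ)^(q - S.card) * (-1:ℂ)^S.card *
        ∑ ε ∈ S.pi (fun _ => ({-1,1} : Finset ℤ)),
          (∑ k ∈ S.attach, (ε k.1 k.2 : ℂ) * α k.1)^(2*r) = 0 := by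
    have hz : (0:ℂ)^(2*r) = 0 := zero_pow (by omega)
    simpa [hz] using key'
  have hbij : ∑ x ∈ ((univ : Finset (Fin q)).sigma
        fun a => (Finset.univ.filter (fun k : Fin q => a < k)).powerset),
      (-2:ℂ) * ((2 : ℂ) ^ (q - (x.2.card + 1)) * (-1) ^ x.2.card *
        ∑ ε ∈ x.2.pi (fun _ => ({-1, 1} : Finset ℤ)),
          (α x.1 + ∑ k ∈ x.2.attach, (ε k.1 k.2 : ℂ) * α k.1) ^ (2 * r))
      = ∑ S ∈ ((univ : Finset (Fin q)).powerset.erase ∅),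
          (2:ℂ)^(q - S.card) * (-1:ℂ)^S.card *
            ∑ ε ∈ S.pi (fun _ => ({-1,1} : Finset ℤ)),
              (∑ k ∈ S.attach, (ε k.1 k.2 : ℂ) * α k.1)^(2*r) := by
    refine Finset.sum_bij (fun x _ => insert x.1 x.2) ?_ ?_ ?_ ?_
    · rintro ⟨a, B⟩ hx
      rw [mem_erase]
      exact ⟨insert_ne_empty _ _, mem_powerset.mpr (subset_univ _)⟩
    · rintro ⟨a₁, B₁⟩ h₁ ⟨a₂, B₂⟩ h₂ heq
      dsimp only at heq
      simp only [mem_sigma, mem_powerset] at h₁ h₂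
      have hlt₁ : ∀ k ∈ B₁, a₁ < k := fun k hk => (mem_filter.mp (h₁.2 hk)).2
      have hlt₂ : ∀ k ∈ B₂, a₂ < k := fun k hk => (mem_filter.mp (h₂.2 hk)).2
      have hn₁ : a₁ ∉ B₁ := fun h => lt_irrefl _ (hlt₁ _ h)
      have hn₂ : a₂ ∉ B₂ := fun h => lt_irrefl _ (hlt₂ _ h)
      have m1 : a₁ ∈ insert a₂ B₂ := heq ▸ mem_insert_self a₁ B₁
      have m2 : a₂ ∈ insert a₁ B₁ := heq.symm ▸ mem_insert_self a₂ B₂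
      have ha : a₁ = a₂ := by
        rcases mem_insert.mp m1 with h | h
        · exact h
        · rcases mem_insert.mp m2 with h' | h'
          · exact h'.symm
          · exact absurd (hlt₂ _ h) (not_lt.mpr (le_of_lt (hlt₁ _ h')))
      subst ha
      have hB : B₁ = B₂ := by
        have := congrArg (fun S => S.erase a₁) heq
        simpa [erase_insert hn₁, erase_insert hn₂] using this
      subst hB
      rfl
    · intro S hS
      rw [mem_erase, mem_powerset] at hS
      have hne : S.Nonempty := nonempty_iff_ne_empty.mpr hS.1
      refine ⟨⟨S.min' hne, S.erase (S.min' hne)⟩, ?_, insert_erase (S.min'_mem hne)⟩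
      rw [mem_sigma, mem_powerset]
      refine ⟨mem_univ _, fun k hk => ?_⟩
      rw [mem_filter]
      exact ⟨mem_univ _, lt_of_le_of_ne (S.min'_le _ (mem_of_mem_erase hk))
        (Ne.symm (ne_of_mem_erase hk))⟩
    · rintro ⟨a, B⟩ hx
      dsimp only
      simp only [mem_sigma, mem_powerset] at hx
      have hlt : ∀ k ∈ B, a < k := fun k hk => (mem_filter.mp (hx.2 hk)).2
      have hn : a ∉ B := fun h => lt_irrefl _ (hlt _ h)
      rw [card_insert_of_notMem hn,
        sum_pi_insert hn (fun p : ∀ x, x ∈ insert a B → ℤ =>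
          (∑ k ∈ (insert a B).attach, (p k.1 k.2 : ℂ) * α k.1)^(2*r)),
        Finset.sum_pair (by decide : (-1:ℤ) ≠ 1)]
      have e1 : ∀ b : ℤ, ∀ ε ∈ B.pi (fun _ => ({-1,1} : Finset ℤ)),
          (∑ k ∈ (insert a B).attach, ((Pi.cons B a b ε k.1 k.2 : ℤ) : ℂ) * α k.1)^(2*r)
            = ((b:ℂ) * α a + ∑ k ∈ B.attach, (ε k.1 k.2 : ℂ) * α k.1)^(2*r) := by
        intro b ε _
        rw [attach_insert_sum α hn b ε]
      rw [Finset.sum_congr rfl (e1 (-1)), Finset.sum_congr rfl (e1 1)]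
      have e2 : ∑ ε ∈ B.pi (fun _ => ({-1,1} : Finset ℤ)),
          (((-1:ℤ):ℂ) * α a + ∑ k ∈ B.attach, (ε k.1 k.2 : ℂ) * α k.1)^(2*r)
          = ∑ ε ∈ B.pi (fun _ => ({-1,1} : Finset ℤ)),
            (α a + ∑ k ∈ B.attach, (ε k.1 k.2 : ℂ) * α k.1)^(2*r) := by
        rw [sum_pi_neg (fun ε => (((-1:ℤ):ℂ) * α a
          + ∑ k ∈ B.attach, (ε k.1 k.2 : ℂ) * α k.1)^(2*r))]
        refine sum_congr rfl fun ε _ => ?_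
        have : ((-1:ℤ):ℂ) * α a + ∑ k ∈ B.attach, ((-(ε k.1 k.2) : ℤ) : ℂ) * α k.1
            = -(α a + ∑ k ∈ B.attach, ((ε k.1 k.2 : ℤ) : ℂ) * α k.1) := by
          push_cast
          rw [neg_add, ← Finset.sum_neg_distrib]
          simp [neg_mul]
        rw [this, Even.neg_pow (even_two_mul r)]
      rw [e2]
      push_cast
      ring
  rw [Finset.sum_sigma']
  have h2 := hbij.trans h1
  rw [← Finset.mul_sum] at h2
  have := (mul_eq_zero.mp h2).resolve_left (by norm_num)
  exact this
end

section
/- For every integer n ≥ 1, the Laplace transform of sin^{2n} t equals (2n)! / (s (s²+2²)(s²+4²)⋯(s²+(2n)²)) for all real s > 0; that is, ∫_0^∞ e^{-st} sin^{2n} t dt = (2n)! / (s ∏_{k=1}^{n}(s² + (2k)²)). -/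
open Finset MeasureTheory Filter Topology Set

lemma integ (s : ℝ) (hs : 0 < s) (m : ℕ) :
    IntegrableOn (fun t => Real.exp (-(s*t)) * Real.sin t ^ m) (Set.Ioi 0) := by
  apply ((exp_neg_integrableOn_Ioi 0 hs).congr_fun (fun x _ => by rw [neg_mul]) measurableSet_Ioi).mono'
  · exact (Continuous.aestronglyMeasurable (by continuity)).restrict
  · filter_upwards with t
    rw [norm_mul, Real.norm_eq_abs, Real.abs_exp]
    calc Real.exp (-(s*t)) * ‖Real.sin t ^ m‖ ≤ Real.exp (-(s*t)) * 1 := by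
          gcongr
          rw [norm_pow, Real.norm_eq_abs]
          exact pow_le_one₀ (abs_nonneg _) (Real.abs_sin_le_one t)
      _ = Real.exp (-(s*t)) := mul_one _

set_option maxHeartbeats 1000000 in
lemma base (s : ℝ) (hs : 0 < s) :
    (∫ t in Set.Ioi (0:ℝ), Real.exp (-(s*t)) * Real.sin t ^ 0) = 1 / s := by
  have hF : ∀ t : ℝ, HasDerivAt (fun t => -Real.exp (-(s*t)) / s)
      (Real.exp (-(s*t)) * Real.sin t ^ 0) t := by
    intro t
    have h1 : HasDerivAt (fun t : ℝ => -(s*t)) (-s) t := by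
      simpa using ((hasDerivAt_id t).const_mul s).fun_neg
    have := ((h1.exp).fun_neg).div_const s
    convert this using 1
    · rfl
    · rfl
    rw [pow_zero, mul_one]
    field_simp
  rw [show (1:ℝ)/s = 0 - (-Real.exp (-(s*0)) / s) by rw [mul_zero, neg_zero, Real.exp_zero]; ring]
  exact integral_Ioi_of_hasDerivAt_of_tendsto' (fun x _ => hF x) (integ s hs 0)
    (by
      have h0 : Tendsto (fun t : ℝ => -Real.exp (-(s*t)) / s) atTop (𝓝 (-0/s)) := by
        apply Tendsto.div_const
        apply Tendsto.neg
        exact Real.tendsto_exp_atBot.comp (by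
          simpa using tendsto_neg_atBot_iff.mpr (tendsto_id.const_mul_atTop hs))
      simpa using h0)

set_option maxHeartbeats 1000000 in
lemma recur (s : ℝ) (hs : 0 < s) (n : ℕ) :
    (∫ t in Set.Ioi (0:ℝ), Real.exp (-(s*t)) * Real.sin t ^ (2*n+2)) =
      ((2*(n:ℝ)+2) * (2*n+1) / (s^2 + (2*(n:ℝ)+2)^2)) *
      ∫ t in Set.Ioi (0:ℝ), Real.exp (-(s*t)) * Real.sin t ^ (2*n) := by
  set D : ℝ := s^2 + (2*(n:ℝ)+2)^2 with hD
  have hD0 : (0:ℝ) < D := by positivity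
  set c : ℝ := (2*(n:ℝ)+2) * (2*n+1) / D with hc
  set F : ℝ → ℝ := fun t => Real.exp (-(s*t)) *
      (s * Real.sin t ^ (2*n+2) + (2*(n:ℝ)+2) * Real.sin t ^ (2*n+1) * Real.cos t) / D with hFdef
  have hderiv : ∀ t : ℝ, HasDerivAt F
      (-(Real.exp (-(s*t)) * Real.sin t ^ (2*n+2))
        + c * (Real.exp (-(s*t)) * Real.sin t ^ (2*n))) t := by
    intro t
    have h1 : HasDerivAt (fun t : ℝ => -(s*t)) (-s) t := by
      simpa using ((hasDerivAt_id t).const_mul s).fun_neg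
    have he := h1.exp
    have hsin := Real.hasDerivAt_sin t
    have hcos := Real.hasDerivAt_cos t
    have hp1 := hsin.pow (2*n+2)
    have hp2 := hsin.pow (2*n+1)
    have hinner := (hp1.const_mul s).add ((hp2.const_mul ((2*(n:ℝ)+2))).mul hcos)
    have hfull := (he.mul hinner).div_const D
    convert hfull using 1
    · rfl
    · rfl
    · rfl
    have hsc : Real.sin t ^ 2 + Real.cos t ^ 2 = 1 := Real.sin_sq_add_cos_sq t
    have h2 : D⁻¹ * D = 1 := inv_mul_cancel₀ (ne_of_gt hD0)
    rw [hc]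
    simp only [Pi.add_apply, Pi.mul_apply, Pi.pow_apply]
    push_cast
    linear_combination (-(2*(n:ℝ)+2)*(2*(n:ℝ)+1) * Real.exp (-(s*t)) * Real.sin t ^ (2*n) / D) * hsc + (Real.exp (-(s*t)) * Real.sin t ^ (2*n+2)) * h2
  have htend : Tendsto F atTop (𝓝 0) := by
    apply squeeze_zero_norm (a := fun t => (s + (2*(n:ℝ)+2)) / D * Real.exp (-(s*t)))
    · intro t
      have hsin1 : ∀ m : ℕ, |Real.sin t ^ m| ≤ 1 := fun m => by
        rw [abs_pow]; exact pow_le_one₀ (abs_nonneg _) (Real.abs_sin_le_one t)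
      have h1 : |s * Real.sin t ^ (2*n+2)| ≤ s := by
        rw [abs_mul, abs_of_pos hs]
        exact mul_le_of_le_one_right hs.le (hsin1 _)
      have h2 : |(2*(n:ℝ)+2) * Real.sin t ^ (2*n+1) * Real.cos t| ≤ 2*(n:ℝ)+2 := by
        rw [abs_mul, abs_mul, abs_of_pos (show (0:ℝ) < 2*(n:ℝ)+2 by positivity)]
        have hm := mul_le_mul
          (mul_le_mul_of_nonneg_left (hsin1 (2*n+1)) (by positivity : (0:ℝ) ≤ 2*(n:ℝ)+2))
          (Real.abs_cos_le_one t) (abs_nonneg _) (by positivity)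
        linarith [hm]
      have hP : |s * Real.sin t ^ (2*n+2) + (2*(n:ℝ)+2) * Real.sin t ^ (2*n+1) * Real.cos t|
          ≤ s + (2*(n:ℝ)+2) := (abs_add_le _ _).trans (add_le_add h1 h2)
      rw [hFdef]
      simp only [norm_div, norm_mul, Real.norm_eq_abs, Real.abs_exp, abs_of_pos hD0]
      calc Real.exp (-(s*t)) * |s * Real.sin t ^ (2*n+2) + (2*(n:ℝ)+2) * Real.sin t ^ (2*n+1) * Real.cos t| / D
          ≤ Real.exp (-(s*t)) * (s + (2*(n:ℝ)+2)) / D := by gcongr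
        _ = (s + (2*(n:ℝ)+2)) / D * Real.exp (-(s*t)) := by ring
    · rw [show (0:ℝ) = (s + (2*(n:ℝ)+2)) / D * 0 by ring]
      apply Tendsto.const_mul
      exact Real.tendsto_exp_atBot.comp (by
        simpa using tendsto_neg_atBot_iff.mpr (tendsto_id.const_mul_atTop hs))
  have hint : IntegrableOn (fun t => -(Real.exp (-(s*t)) * Real.sin t ^ (2*n+2))
        + c * (Real.exp (-(s*t)) * Real.sin t ^ (2*n))) (Set.Ioi 0) :=
    ((integ s hs (2*n+2)).neg).add ((integ s hs (2*n)).const_mul c)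
  have key := integral_Ioi_of_hasDerivAt_of_tendsto' (f := F)
    (fun x _ => hderiv x) hint htend
  have hF0 : F 0 = 0 := by
    rw [hFdef]; simp
  rw [hF0, sub_zero] at key
  have i1 : IntegrableOn (fun t => -(Real.exp (-(s*t)) * Real.sin t ^ (2*n+2))) (Set.Ioi 0) :=
    (integ s hs (2*n+2)).neg
  have i2 : IntegrableOn (fun t => c * (Real.exp (-(s*t)) * Real.sin t ^ (2*n))) (Set.Ioi 0) :=
    (integ s hs (2*n)).const_mul c
  rw [integral_add i1 i2, integral_neg, integral_const_mul] at key
  have := integ s hs (2*n+2)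
  linarith [key]

/-- The Laplace transform of `sin^{2n}`. -/
theorem stmt_4 (n : ℕ) (hn : 1 ≤ n) (s : ℝ) (hs : 0 < s) :
    (∫ t in Set.Ioi (0 : ℝ), Real.exp (-(s * t)) * Real.sin t ^ (2 * n)) =
      ((2 * n).factorial : ℝ) /
        (s * ∏ k ∈ Finset.Icc 1 n, (s ^ 2 + ((2 * k : ℕ) : ℝ) ^ 2)) := by
  induction n with
  | zero => simpa using base s hs
  | succ m ih =>
    rcases Nat.eq_zero_or_pos m with rfl | hm
    · -- n = 1
      have h2 : 2*1 = 2*0+2 := by ring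
      rw [h2, recur s hs 0]
      have hb := base s hs
      rw [hb]
      simp [Finset.Icc_self, Nat.factorial]
      push_cast
      field_simp
    · have h2 : 2*(m+1) = 2*m+2 := by ring
      rw [h2, recur s hs m, ih hm]
      rw [Finset.prod_Icc_succ_top (Nat.succ_le_succ (Nat.zero_le m))]
      have hprod : (0:ℝ) < ∏ k ∈ Finset.Icc 1 m, (s^2 + ((2*k:ℕ):ℝ)^2) := by
        apply Finset.prod_pos; intro i _; positivity
      have hfact : ((2*m+2).factorial : ℝ) = (2*(m:ℝ)+2)*(2*(m:ℝ)+1)*((2*m).factorial : ℝ) := by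
        have h3 : 2*m+2 = (2*m+1)+1 := by ring
        rw [h3, Nat.factorial_succ, Nat.factorial_succ]
        push_cast
        ring
      rw [hfact]
      simp only [Nat.succ_eq_add_one, zero_add]
      push_cast
      have hDne : s^2 + (2*(m:ℝ)+2)^2 ≠ 0 := by positivity
      field_simp
end

section
/- For every integer m ≥ 1 and every complex s with Re(s) > 1, ∑_{n=1}^{∞} Λ(n)^m / n^s = ∑_{δ=1}^{∞} b_m(δ) G_m(δ s), where b_m(k) = ∑_{d | k} μ(d) d^{m-1} and G_m(s) = ∑_{n=1}^{∞} Λ(n)(log n)^{m-1} / n^s, and all series converge absolutely. -/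
set_option maxHeartbeats 1000000

open ArithmeticFunction
open scoped ArithmeticFunction.zeta

/-- `b_m(k) = ∑_{d ∣ k} μ(d) d^{m-1}`, as a complex number. -/
noncomputable def bFun (m k : ℕ) : ℂ :=
  ∑ d ∈ k.divisors, (ArithmeticFunction.moebius d : ℂ) * (d : ℂ) ^ (m - 1)

/-- `G_m(s) = ∑ Λ(n) (log n)^{m-1} / n^s`. -/
noncomputable def GFun (m : ℕ) (s : ℂ) : ℂ :=
  ∑' n : ℕ, (ArithmeticFunction.vonMangoldt n : ℂ) * (Real.log n : ℂ) ^ (m - 1) / (n : ℂ) ^ s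

open Finset

noncomputable def Pfun (m : ℕ) : ArithmeticFunction ℂ :=
  ⟨fun n => if n = 0 then 0 else (n : ℂ) ^ (m - 1), by simp⟩

lemma Pfun_apply {m n : ℕ} (hn : n ≠ 0) : Pfun m n = (n : ℂ) ^ (m - 1) := if_neg hn

lemma pmul_mul_pmul (m : ℕ) (f g : ArithmeticFunction ℂ) :
    (f.pmul (Pfun m)) * (g.pmul (Pfun m)) = (f * g).pmul (Pfun m) := by
  ext n
  rw [pmul_apply, mul_apply, mul_apply, Finset.sum_mul]
  refine Finset.sum_congr rfl fun p hp => ?_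
  obtain ⟨hpn, hn⟩ := Nat.mem_divisorsAntidiagonal.mp hp
  have h1 : p.1 ≠ 0 := fun h => hn (by rw [← hpn, h, zero_mul])
  have h2 : p.2 ≠ 0 := fun h => hn (by rw [← hpn, h, mul_zero])
  rw [pmul_apply, pmul_apply, Pfun_apply h1, Pfun_apply h2, ← hpn, Pfun_apply (mul_ne_zero h1 h2)]
  push_cast
  ring

lemma zeta_pmul (m : ℕ) : (↑(ζ : ArithmeticFunction ℕ) : ArithmeticFunction ℂ).pmul (Pfun m) = Pfun m := by
  ext n
  rcases eq_or_ne n 0 with rfl | hn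
  · simp
  · rw [pmul_apply, natCoe_apply, zeta_apply_ne hn]
    simp

lemma one_pmul (m : ℕ) : (1 : ArithmeticFunction ℂ).pmul (Pfun m) = 1 := by
  ext n
  rcases eq_or_ne n 1 with rfl | hn
  · simp [Pfun_apply]
  · simp [one_apply_ne hn]

lemma bFun_eq (m δ : ℕ) :
    bFun m δ = (((↑(moebius) : ArithmeticFunction ℂ).pmul (Pfun m)) * ↑(ζ : ArithmeticFunction ℕ)) δ := by
  rw [coe_mul_zeta_apply, bFun]
  refine Finset.sum_congr rfl fun d hd => ?_
  rw [pmul_apply, intCoe_apply, Pfun_apply (Nat.pos_of_mem_divisors hd).ne']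

lemma key_identity (m : ℕ) {a : ℕ} (ha : a ≠ 0) :
    ∑ δ ∈ a.divisors, bFun m δ * ((a / δ : ℕ) : ℂ) ^ (m - 1) = 1 := by
  have h1 : (((↑(moebius) : ArithmeticFunction ℂ).pmul (Pfun m)) * ↑(ζ : ArithmeticFunction ℕ)) * Pfun m
      = ↑(ζ : ArithmeticFunction ℕ) := by
    rw [mul_right_comm]
    nth_rewrite 2 [← zeta_pmul m]
    rw [pmul_mul_pmul, coe_moebius_mul_coe_zeta, one_pmul, one_mul]
  have h2 : ((((↑(moebius) : ArithmeticFunction ℂ).pmul (Pfun m)) * ↑(ζ : ArithmeticFunction ℕ)) * Pfun m) a = 1 := by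
    rw [h1, natCoe_apply, zeta_apply_ne ha, Nat.cast_one]
  rw [mul_apply] at h2
  rw [← h2, ← Nat.sum_divisorsAntidiagonal (fun x y => bFun m x * ((y : ℕ) : ℂ) ^ (m - 1))]
  refine Finset.sum_congr rfl fun p hp => ?_
  obtain ⟨hpn, hn⟩ := Nat.mem_divisorsAntidiagonal.mp hp
  have hp2 : p.2 ≠ 0 := fun h => hn (by rw [← hpn, h, mul_zero])
  rw [bFun_eq, Pfun_apply hp2]

/-- the finite fiber of `n` under `(δ, k) ↦ k ^ δ`, for `n ≥ 2`. -/
def Sfib (n : ℕ) : Finset (ℕ × ℕ) :=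
  ((Finset.range (n + 1)) ×ˢ (Finset.range (n + 1))).filter (fun p => p.2 ^ p.1 = n)

lemma mem_Sfib {n : ℕ} (hn : 2 ≤ n) {p : ℕ × ℕ} : p ∈ Sfib n ↔ p.2 ^ p.1 = n := by
  constructor
  · exact fun h => (Finset.mem_filter.mp h).2
  · intro h
    have h1 : p.1 ≠ 0 := by intro h0; rw [h0, pow_zero] at h; omega
    have h2 : 2 ≤ p.2 := by
      by_contra h'
      have : p.2 = 0 ∨ p.2 = 1 := by omega
      rcases this with h0 | h0 <;> rw [h0] at h
      · rw [zero_pow h1] at h; omega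
      · rw [one_pow] at h; omega
    have hp2n : p.2 ≤ n := by
      conv_rhs => rw [← h]
      exact Nat.le_self_pow h1 _
    have hp1n : p.1 < n := by
      calc p.1 < 2 ^ p.1 := Nat.lt_two_pow_self
      _ ≤ p.2 ^ p.1 := Nat.pow_le_pow_left h2 _
      _ = n := h
    refine Finset.mem_filter.mpr ⟨Finset.mem_product.mpr ⟨?_, ?_⟩, h⟩ <;>
      simp only [Finset.mem_range] <;> omega

lemma two_le_prime_pow {q a : ℕ} (hq : q.Prime) (ha : a ≠ 0) : 2 ≤ q ^ a :=
  calc 2 ≤ q := hq.two_le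
  _ = q ^ 1 := (pow_one q).symm
  _ ≤ q ^ a := Nat.pow_le_pow_right hq.pos (by omega)

lemma Sfib_prime_pow {q a : ℕ} (hq : q.Prime) (ha : a ≠ 0) {p : ℕ × ℕ}
    (hp : p ∈ Sfib (q ^ a)) : p.1 ∈ a.divisors ∧ p.2 = q ^ (a / p.1) := by
  have h := (mem_Sfib (two_le_prime_pow hq ha)).mp hp
  have h1 : p.1 ≠ 0 := by
    intro h0; rw [h0, pow_zero] at h
    have := two_le_prime_pow hq ha; omega
  have hdvd : p.2 ∣ q ^ a := h ▸ dvd_pow_self p.2 h1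
  obtain ⟨b, hb, hpb⟩ := (Nat.dvd_prime_pow hq).mp hdvd
  rw [hpb, ← Nat.pow_mul] at h
  have hba : b * p.1 = a := Nat.pow_right_injective hq.two_le h
  constructor
  · exact Nat.mem_divisors.mpr ⟨⟨b, by rw [mul_comm]; exact hba.symm⟩, ha⟩
  · rw [hpb, ← hba, Nat.mul_div_cancel b (Nat.pos_of_ne_zero h1)]

lemma fiber_sum (m : ℕ) (hm : 1 ≤ m) {n : ℕ} (hn : 2 ≤ n) :
    ∑ p ∈ Sfib n, bFun m p.1 * ((ArithmeticFunction.vonMangoldt p.2 : ℂ) *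
      (Real.log p.2 : ℂ) ^ (m - 1)) = (ArithmeticFunction.vonMangoldt n : ℂ) ^ m := by
  by_cases hpp : IsPrimePow n
  · obtain ⟨q, a, hq, ha, rfl⟩ := hpp
    rw [← Nat.prime_iff] at hq
    have ha0 : a ≠ 0 := ha.ne'
    have hΛ : ∀ b : ℕ, b ≠ 0 → ArithmeticFunction.vonMangoldt (q ^ b) = Real.log q := fun b hb => by
      rw [ArithmeticFunction.vonMangoldt_apply_pow hb, ArithmeticFunction.vonMangoldt_apply_prime hq]
    rw [Finset.sum_nbij' (i := fun p : ℕ × ℕ => p.1) (j := fun δ => ((δ, q ^ (a / δ)) : ℕ × ℕ))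
      (t := a.divisors)
      (g := fun δ => bFun m δ * ((ArithmeticFunction.vonMangoldt (q ^ (a / δ)) : ℂ) *
        (Real.log ((q ^ (a / δ) : ℕ) : ℝ) : ℂ) ^ (m - 1)))
      (fun p hp => (Sfib_prime_pow hq ha0 hp).1)
      (fun δ hδ => by
        rw [mem_Sfib (two_le_prime_pow hq ha0)]
        simp only
        rw [← Nat.pow_mul, Nat.div_mul_cancel (Nat.mem_divisors.mp hδ).1])
      (fun p hp => ((Sfib_prime_pow hq ha0 hp).2 ▸ rfl : (p.1, q ^ (a / p.1)) = p))
      (fun δ hδ => rfl)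
      (fun p hp => by rw [(Sfib_prime_pow hq ha0 hp).2])]
    have hm' : m - 1 + 1 = m := Nat.succ_pred_eq_of_pos hm
    have hterm : ∀ δ ∈ a.divisors, bFun m δ *
        ((ArithmeticFunction.vonMangoldt (q ^ (a / δ)) : ℂ) * (Real.log (q ^ (a / δ) : ℕ) : ℂ) ^ (m - 1))
        = (bFun m δ * ((a / δ : ℕ) : ℂ) ^ (m - 1)) * (Real.log q : ℂ) ^ m := by
      intro δ hδ
      have hδ0 : δ ≠ 0 := (Nat.pos_of_mem_divisors hδ).ne'
      have had : a / δ ≠ 0 :=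
        Nat.div_ne_zero_iff.mpr ⟨hδ0, Nat.le_of_dvd (Nat.pos_of_ne_zero ha0) (Nat.mem_divisors.mp hδ).1⟩
      rw [hΛ _ had]
      have hlog : (Real.log (q ^ (a / δ) : ℕ) : ℂ) = ((a / δ : ℕ) : ℂ) * (Real.log q : ℂ) := by
        push_cast
        rw [Real.log_pow]
        push_cast; ring
      have hLm : (Real.log q : ℂ) ^ m = (Real.log q : ℂ) ^ (m - 1) * (Real.log q : ℂ) := by
        rw [← pow_succ, hm']
      rw [hlog, mul_pow, hLm]
      ring
    rw [Finset.sum_congr rfl hterm, ← Finset.sum_mul, key_identity m ha0, one_mul, hΛ a ha0]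
  · have hΛn : ArithmeticFunction.vonMangoldt n = 0 := ArithmeticFunction.vonMangoldt_eq_zero_iff.mpr hpp
    rw [hΛn]
    rw [Finset.sum_eq_zero, eq_comm]
    · push_cast; exact zero_pow (by omega)
    · intro p hp
      have h := (mem_Sfib hn).mp hp
      have h1 : p.1 ≠ 0 := by intro h0; rw [h0, pow_zero] at h; omega
      have : ¬ IsPrimePow p.2 := fun hp2 => hpp (h ▸ hp2.pow h1)
      rw [ArithmeticFunction.vonMangoldt_eq_zero_iff.mpr this]
      push_cast; ring

lemma summable_logpow (M : ℕ) {x : ℝ} (hx : 1 < x) :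
    Summable (fun n : ℕ => Real.log n ^ M / (n : ℝ) ^ x) := by
  set ε : ℝ := (x - 1) / (2 * (M + 1)) with hε
  have hε0 : 0 < ε := div_pos (by linarith) (by positivity)
  have hexp : ε * M - x < -1 := by
    have h1 : ε * M ≤ (x - 1) / 2 := by
      rw [hε, div_mul_eq_mul_div, div_le_div_iff₀ (by positivity) (by norm_num)]
      nlinarith [Nat.cast_nonneg (α := ℝ) M]
    linarith
  have hsum : Summable (fun n : ℕ => (1 / ε ^ M) * (n : ℝ) ^ (ε * M - x)) :=
    (Real.summable_nat_rpow.mpr (by linarith)).mul_left _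
  refine Summable.of_nonneg_of_le (fun n => by positivity) (fun n => ?_) hsum
  rcases Nat.eq_zero_or_pos n with rfl | hn
  · rw [Nat.cast_zero, Real.zero_rpow (by linarith), div_zero]
    positivity
  · have hn1 : (1 : ℝ) ≤ n := by exact_mod_cast hn
    have hlog : Real.log n ^ M ≤ (n : ℝ) ^ (ε * M) / ε ^ M := by
      calc Real.log n ^ M ≤ ((n : ℝ) ^ ε / ε) ^ M :=
            pow_le_pow_left₀ (Real.log_natCast_nonneg n)
              (Real.log_le_rpow_div (Nat.cast_nonneg n) hε0) M
      _ = (n : ℝ) ^ (ε * M) / ε ^ M := by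
            rw [div_pow, ← Real.rpow_natCast ((n:ℝ) ^ ε), ← Real.rpow_mul (Nat.cast_nonneg n)]

    have hnx : (0:ℝ) < (n : ℝ) ^ x := Real.rpow_pos_of_pos (by linarith) x
    calc Real.log n ^ M / (n : ℝ) ^ x ≤ ((n : ℝ) ^ (ε * M) / ε ^ M) / (n : ℝ) ^ x := by
          gcongr
    _ = (1 / ε ^ M) * (n : ℝ) ^ (ε * M - x) := by
          rw [Real.rpow_sub (by linarith)]
          field_simp

lemma summable_core (M : ℕ) {x : ℝ} (hx : 1 < x) :
    Summable (fun n : ℕ => ArithmeticFunction.vonMangoldt n * Real.log n ^ M / (n : ℝ) ^ x) := by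
  refine Summable.of_nonneg_of_le (fun n => ?_) (fun n => ?_) (summable_logpow (M + 1) hx)
  · exact div_nonneg (mul_nonneg vonMangoldt_nonneg (pow_nonneg (Real.log_natCast_nonneg n) _))
      (Real.rpow_nonneg (Nat.cast_nonneg n) _)
  · have h1 : ArithmeticFunction.vonMangoldt n * Real.log n ^ M ≤ Real.log n ^ (M + 1) := by
      rw [pow_succ, mul_comm ((Real.log n) ^ M)]
      exact mul_le_mul_of_nonneg_right vonMangoldt_le_log
        (pow_nonneg (Real.log_natCast_nonneg n) _)
    exact div_le_div_of_nonneg_right h1 (Real.rpow_nonneg (Nat.cast_nonneg n) x)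

lemma norm_term_eq (M : ℕ) (w : ℂ) (n : ℕ) :
    ‖(ArithmeticFunction.vonMangoldt n : ℂ) * (Real.log n : ℂ) ^ M / (n : ℂ) ^ w‖
      = ArithmeticFunction.vonMangoldt n * Real.log n ^ M / (n : ℝ) ^ w.re := by
  rcases Nat.eq_zero_or_pos n with rfl | hn
  · simp
  · rw [norm_div, Complex.norm_natCast_cpow_of_pos hn, norm_mul, norm_pow,
      Complex.norm_real, Complex.norm_real, Real.norm_eq_abs, Real.norm_eq_abs,
      abs_of_nonneg vonMangoldt_nonneg, abs_of_nonneg (Real.log_natCast_nonneg n)]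

lemma summable_normG (M : ℕ) {w : ℂ} (hw : 1 < w.re) :
    Summable (fun n : ℕ =>
      ‖(ArithmeticFunction.vonMangoldt n : ℂ) * (Real.log n : ℂ) ^ M / (n : ℂ) ^ w‖) := by
  simp_rw [norm_term_eq]
  exact summable_core M hw

lemma cpow_nat_mul' (k δ : ℕ) (s : ℂ) : (k : ℂ) ^ ((δ : ℂ) * s) = ((k ^ δ : ℕ) : ℂ) ^ s := by
  have him : (Complex.log k * (δ : ℂ)).im = 0 := by
    simp [Complex.mul_im, Complex.log_im, Complex.natCast_arg]
  rw [Nat.cast_pow, ← Complex.cpow_natCast (k : ℂ) δ, ← Complex.cpow_mul]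
  · rw [him]; exact neg_lt_zero.mpr Real.pi_pos
  · rw [him]; exact Real.pi_nonneg

lemma bFun_bound (m : ℕ) (hm : 1 ≤ m) (δ : ℕ) : ‖bFun m δ‖ ≤ (δ : ℝ) ^ m := by
  rcases Nat.eq_zero_or_pos δ with rfl | hδ
  · simp [bFun, zero_pow (by omega : m ≠ 0)]
  calc ‖bFun m δ‖ ≤ ∑ d ∈ δ.divisors, ‖(ArithmeticFunction.moebius d : ℂ) * (d : ℂ) ^ (m - 1)‖ :=
        norm_sum_le _ _
  _ ≤ ∑ d ∈ δ.divisors, (δ : ℝ) ^ (m - 1) := by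
      refine Finset.sum_le_sum fun d hd => ?_
      rw [norm_mul, norm_pow, Complex.norm_natCast]
      have h1 : ‖((ArithmeticFunction.moebius d : ℤ) : ℂ)‖ ≤ 1 := by
        rw [Complex.norm_intCast]
        exact_mod_cast ArithmeticFunction.abs_moebius_le_one
      have h2 : ((d : ℝ)) ^ (m - 1) ≤ (δ : ℝ) ^ (m - 1) := by
        gcongr
        exact_mod_cast Nat.divisor_le hd
      calc ‖((ArithmeticFunction.moebius d : ℤ) : ℂ)‖ * (d : ℝ) ^ (m - 1)
          ≤ 1 * (δ : ℝ) ^ (m - 1) := by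
            exact mul_le_mul h1 h2 (by positivity) one_pos.le
      _ = (δ : ℝ) ^ (m - 1) := one_mul _
  _ = (δ.divisors.card : ℝ) * (δ : ℝ) ^ (m - 1) := by rw [Finset.sum_const, nsmul_eq_mul]
  _ ≤ (δ : ℝ) * (δ : ℝ) ^ (m - 1) := by
      gcongr
      have hsub : δ.divisors ⊆ Finset.Icc 1 δ := fun d hd =>
        Finset.mem_Icc.mpr ⟨Nat.pos_of_mem_divisors hd, Nat.divisor_le hd⟩
      have hcard : δ.divisors.card ≤ δ := by
        calc δ.divisors.card ≤ (Finset.Icc 1 δ).card := Finset.card_le_card hsub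
        _ = δ := by rw [Nat.card_Icc]; omega
      exact_mod_cast hcard
  _ = (δ : ℝ) ^ m := by
      have h : (δ : ℝ) ^ m = (δ : ℝ) ^ (m - 1) * (δ : ℝ) := by
        rw [← pow_succ, Nat.sub_add_cancel hm]
      rw [h]; ring

lemma re_nat_mul (δ : ℕ) (s : ℂ) : ((δ : ℂ) * s).re = δ * s.re := by
  simp [Complex.mul_re]

lemma tail_bound (M : ℕ) {s : ℂ} (hs : 1 < s.re) {δ : ℕ} (hδ : 1 ≤ δ) :
    ∑' n : ℕ, ‖(ArithmeticFunction.vonMangoldt n : ℂ) * (Real.log n : ℂ) ^ M /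
        (n : ℂ) ^ ((δ : ℂ) * s)‖
      ≤ ((2 : ℝ) ^ s.re * ∑' n : ℕ, ArithmeticFunction.vonMangoldt n * Real.log n ^ M /
          (n : ℝ) ^ s.re) * ((2 : ℝ) ^ (-s.re)) ^ δ := by
  set sg := s.re with hsgdef
  have hsg0 : 0 < sg := lt_trans one_pos hs
  have h1δ : (1 : ℝ) ≤ (δ : ℝ) := by exact_mod_cast hδ
  have hδsg : 1 < (δ : ℝ) * sg := by nlinarith
  have hconst : (2 : ℝ) ^ sg * ((2 : ℝ) ^ (-sg)) ^ δ = ((2 : ℝ) ^ ((δ : ℝ) * sg - sg))⁻¹ := by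
    rw [← Real.rpow_natCast ((2 : ℝ) ^ (-sg)) δ,
      ← Real.rpow_mul (by norm_num : (0:ℝ) ≤ 2), ← Real.rpow_add two_pos,
      ← Real.rpow_neg (by norm_num : (0:ℝ) ≤ 2)]
    congr 1
    ring
  have hterm : ∀ n : ℕ, ‖(ArithmeticFunction.vonMangoldt n : ℂ) * (Real.log n : ℂ) ^ M /
        (n : ℂ) ^ ((δ : ℂ) * s)‖
      ≤ ((2 : ℝ) ^ sg * ((2 : ℝ) ^ (-sg)) ^ δ) *
        (ArithmeticFunction.vonMangoldt n * Real.log n ^ M / (n : ℝ) ^ sg) := by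
    intro n
    rw [norm_term_eq, re_nat_mul]
    set A := ArithmeticFunction.vonMangoldt n * Real.log n ^ M with hA
    have hA0 : 0 ≤ A := mul_nonneg vonMangoldt_nonneg (pow_nonneg (Real.log_natCast_nonneg n) _)
    rcases Nat.lt_or_ge n 2 with hn | hn
    · have : ArithmeticFunction.vonMangoldt n = 0 := by
        interval_cases n
        · simp
        · simp
      rw [hA, this]
      simp only [zero_mul, zero_div]
      positivity
    · have hn0 : (0 : ℝ) < n := by exact_mod_cast Nat.lt_of_lt_of_le two_pos hn
      have hn2 : (2 : ℝ) ≤ n := by exact_mod_cast hn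
      have hexp0 : 0 ≤ (δ : ℝ) * sg - sg := by nlinarith
      have hsplit : (n : ℝ) ^ ((δ : ℝ) * sg) = (n : ℝ) ^ sg * (n : ℝ) ^ ((δ : ℝ) * sg - sg) := by
        rw [← Real.rpow_add hn0]; ring_nf
      rw [hconst, hsplit]
      have hrw : ((2 : ℝ) ^ ((δ : ℝ) * sg - sg))⁻¹ * (A / (n : ℝ) ^ sg)
          = A / ((n : ℝ) ^ sg * (2 : ℝ) ^ ((δ : ℝ) * sg - sg)) := by
        rw [mul_comm, ← div_eq_mul_inv, div_div]
      rw [hrw]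
      refine div_le_div_of_nonneg_left hA0 (by positivity) ?_
      exact mul_le_mul_of_nonneg_left (Real.rpow_le_rpow (by norm_num) hn2 hexp0)
        (Real.rpow_nonneg (Nat.cast_nonneg n) _)
  calc ∑' n : ℕ, ‖(ArithmeticFunction.vonMangoldt n : ℂ) * (Real.log n : ℂ) ^ M /
        (n : ℂ) ^ ((δ : ℂ) * s)‖
      ≤ ∑' n : ℕ, ((2 : ℝ) ^ sg * ((2 : ℝ) ^ (-sg)) ^ δ) *
        (ArithmeticFunction.vonMangoldt n * Real.log n ^ M / (n : ℝ) ^ sg) := by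
        refine Summable.tsum_le_tsum hterm ?_ ?_
        · have := summable_core M hδsg
          refine Summable.congr this (fun n => ?_)
          rw [norm_term_eq, re_nat_mul]
        · exact (summable_core M hs).mul_left _
  _ = ((2 : ℝ) ^ sg * ∑' n : ℕ, ArithmeticFunction.vonMangoldt n * Real.log n ^ M /
        (n : ℝ) ^ sg) * ((2 : ℝ) ^ (-sg)) ^ δ := by
        rw [tsum_mul_left]; ring

/-- For `Re s > 1`, `∑ Λ(n)^m / n^s = ∑_δ b_m(δ) G_m(δ s)`, with all series converging
absolutely. -/
theorem stmt_15 (m : ℕ) (hm : 1 ≤ m) (s : ℂ) (hs : 1 < s.re) :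
    Summable (fun n : ℕ => ‖(ArithmeticFunction.vonMangoldt n : ℂ) ^ m / (n : ℂ) ^ s‖) ∧
    (∀ δ : ℕ, 1 ≤ δ → Summable (fun n : ℕ =>
      ‖(ArithmeticFunction.vonMangoldt n : ℂ) * (Real.log n : ℂ) ^ (m - 1) /
        (n : ℂ) ^ ((δ : ℂ) * s)‖)) ∧
    Summable (fun δ : ℕ => ‖bFun m δ * GFun m ((δ : ℂ) * s)‖) ∧
    (∑' n : ℕ, (ArithmeticFunction.vonMangoldt n : ℂ) ^ m / (n : ℂ) ^ s) =
      ∑' δ : ℕ, bFun m δ * GFun m ((δ : ℂ) * s) := by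
  classical
  have hb0 : bFun m 0 = 0 := by simp [bFun]
  -- part B
  have partB : ∀ δ : ℕ, 1 ≤ δ → Summable (fun n : ℕ =>
      ‖(ArithmeticFunction.vonMangoldt n : ℂ) * (Real.log n : ℂ) ^ (m - 1) /
        (n : ℂ) ^ ((δ : ℂ) * s)‖) := by
    intro δ hδ
    apply summable_normG
    rw [re_nat_mul]
    have h1 : (1 : ℝ) ≤ (δ : ℝ) := by exact_mod_cast hδ
    nlinarith
  -- part A
  have partA : Summable (fun n : ℕ =>
      ‖(ArithmeticFunction.vonMangoldt n : ℂ) ^ m / (n : ℂ) ^ s‖) := by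
    have S1 : Summable (fun n : ℕ =>
        ‖(ArithmeticFunction.vonMangoldt n : ℂ) * (Real.log n : ℂ) ^ (m - 1) /
          (n : ℂ) ^ s‖) := by
      have := partB 1 le_rfl
      simpa using this
    refine Summable.of_nonneg_of_le (fun n => norm_nonneg _) (fun n => ?_) S1
    rw [norm_div, norm_div]
    refine div_le_div_of_nonneg_right ?_ (norm_nonneg _)
    rw [norm_pow, norm_mul, norm_pow, Complex.norm_real, Complex.norm_real,
      Real.norm_eq_abs, Real.norm_eq_abs, abs_of_nonneg vonMangoldt_nonneg,
      abs_of_nonneg (Real.log_natCast_nonneg n)]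
    have heq : ArithmeticFunction.vonMangoldt n ^ m
        = ArithmeticFunction.vonMangoldt n * ArithmeticFunction.vonMangoldt n ^ (m - 1) := by
      rw [← pow_succ', Nat.sub_add_cancel hm]
    rw [heq]
    exact mul_le_mul_of_nonneg_left
      (pow_le_pow_left₀ vonMangoldt_nonneg vonMangoldt_le_log _) vonMangoldt_nonneg
  -- geometric majorant
  set K : ℝ := ∑' n : ℕ, ArithmeticFunction.vonMangoldt n * Real.log n ^ (m - 1) /
    (n : ℝ) ^ s.re with hKdef
  have hK0 : 0 ≤ K := tsum_nonneg fun n =>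
    div_nonneg (mul_nonneg vonMangoldt_nonneg (pow_nonneg (Real.log_natCast_nonneg n) _))
      (Real.rpow_nonneg (Nat.cast_nonneg n) _)
  set r : ℝ := (2 : ℝ) ^ (-s.re) with hrdef
  have hr0 : 0 < r := Real.rpow_pos_of_pos two_pos _
  have hr1 : ‖r‖ < 1 := by
    rw [Real.norm_eq_abs, abs_of_pos hr0]
    exact Real.rpow_lt_one_of_one_lt_of_neg one_lt_two (by linarith)
  have hgeom : Summable (fun δ : ℕ => ((2 : ℝ) ^ s.re * K) * ((δ : ℝ) ^ m * r ^ δ)) :=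
    (summable_pow_mul_geometric_of_norm_lt_one m hr1).mul_left _
  -- the double-indexed function
  set F : ℕ × ℕ → ℂ := fun p => bFun m p.1 *
    ((ArithmeticFunction.vonMangoldt p.2 : ℂ) * (Real.log p.2 : ℂ) ^ (m - 1) /
      (p.2 : ℂ) ^ ((p.1 : ℂ) * s)) with hFdef
  have hF0 : ∀ k : ℕ, F (0, k) = 0 := fun k => by
    simp only [hFdef, hb0, zero_mul]
  have hFcol : ∀ δ : ℕ, Summable (fun k : ℕ => ‖F (δ, k)‖) := by
    intro δ
    rcases Nat.eq_zero_or_pos δ with rfl | hδ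
    · exact summable_zero.congr fun k => by rw [hF0, norm_zero]
    · exact ((partB δ hδ).mul_left ‖bFun m δ‖).congr fun k => (norm_mul _ _).symm
  have hFcolBound : ∀ δ : ℕ, 1 ≤ δ →
      ∑' k : ℕ, ‖F (δ, k)‖ ≤ ((2 : ℝ) ^ s.re * K) * ((δ : ℝ) ^ m * r ^ δ) := by
    intro δ hδ
    have h1 : ∑' k : ℕ, ‖F (δ, k)‖ = ‖bFun m δ‖ *
        ∑' k : ℕ, ‖(ArithmeticFunction.vonMangoldt k : ℂ) * (Real.log k : ℂ) ^ (m - 1) /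
          (k : ℂ) ^ ((δ : ℂ) * s)‖ := by
      rw [← tsum_mul_left]
      exact tsum_congr fun k => norm_mul _ _
    rw [h1]
    calc ‖bFun m δ‖ * ∑' k : ℕ, ‖(ArithmeticFunction.vonMangoldt k : ℂ) *
          (Real.log k : ℂ) ^ (m - 1) / (k : ℂ) ^ ((δ : ℂ) * s)‖
        ≤ (δ : ℝ) ^ m * (((2 : ℝ) ^ s.re * K) * r ^ δ) := by
          refine mul_le_mul (bFun_bound m hm δ) (tail_bound (m - 1) hs hδ)
            (tsum_nonneg fun k => norm_nonneg _) (by positivity)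
    _ = ((2 : ℝ) ^ s.re * K) * ((δ : ℝ) ^ m * r ^ δ) := by ring
  have hFnorm : Summable (fun p : ℕ × ℕ => ‖F p‖) := by
    refine (summable_prod_of_nonneg (fun p => norm_nonneg _)).mpr ⟨hFcol, ?_⟩
    refine Summable.of_nonneg_of_le (fun δ => tsum_nonneg fun k => norm_nonneg _)
      (fun δ => ?_) hgeom
    rcases Nat.eq_zero_or_pos δ with rfl | hδ
    · have hz : ∑' k : ℕ, ‖F (0, k)‖ = 0 := by
        rw [tsum_congr (fun k => by rw [hF0, norm_zero] : ∀ k : ℕ, ‖F (0, k)‖ = (0:ℝ))]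
        exact tsum_zero
      rw [hz]
      positivity
    · exact hFcolBound δ hδ
  have hFsum : Summable F := hFnorm.of_norm
  -- part C
  have partC : Summable (fun δ : ℕ => ‖bFun m δ * GFun m ((δ : ℂ) * s)‖) := by
    refine Summable.of_nonneg_of_le (fun _ => norm_nonneg _) (fun δ => ?_) hgeom
    rcases Nat.eq_zero_or_pos δ with rfl | hδ
    · rw [hb0, zero_mul, norm_zero]
      positivity
    · have hG : ‖GFun m ((δ : ℂ) * s)‖ ≤ ((2 : ℝ) ^ s.re * K) * r ^ δ :=
        (norm_tsum_le_tsum_norm (partB δ hδ)).trans (tail_bound (m - 1) hs hδ)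
      calc ‖bFun m δ * GFun m ((δ : ℂ) * s)‖ = ‖bFun m δ‖ * ‖GFun m ((δ : ℂ) * s)‖ :=
            norm_mul _ _
      _ ≤ (δ : ℝ) ^ m * (((2 : ℝ) ^ s.re * K) * r ^ δ) :=
            mul_le_mul (bFun_bound m hm δ) hG (norm_nonneg _) (by positivity)
      _ = ((2 : ℝ) ^ s.re * K) * ((δ : ℝ) ^ m * r ^ δ) := by ring
  -- step 1 : tsum over pairs
  have step1 : ∑' δ : ℕ, bFun m δ * GFun m ((δ : ℂ) * s) = ∑' p : ℕ × ℕ, F p := by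
    rw [Summable.tsum_prod' hFsum (fun δ => (hFcol δ).of_norm)]
    exact tsum_congr fun δ => tsum_mul_left.symm
  -- step 2 : fiberwise
  have step2 : ∑' p : ℕ × ℕ, F p
      = ∑' n : ℕ, (ArithmeticFunction.vonMangoldt n : ℂ) ^ m / (n : ℂ) ^ s := by
    have hm0 : m ≠ 0 := by omega
    set g : ℕ × ℕ → ℕ := fun p => p.2 ^ p.1 with hgdef
    have hsig : Summable (fun q : Σ n : ℕ, {p : ℕ × ℕ // g p = n} => F q.2) := by
      have h := ((Equiv.sigmaFiberEquiv g).summable_iff (f := F)).mpr hFsum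
      exact h
    have e1 : ∑' p : ℕ × ℕ, F p = ∑' q : Σ n : ℕ, {p : ℕ × ℕ // g p = n}, F q.2 := by
      have h := (Equiv.sigmaFiberEquiv g).tsum_eq (f := F)
      exact h.symm
    have e2 : ∑' q : Σ n : ℕ, {p : ℕ × ℕ // g p = n}, F q.2
        = ∑' n : ℕ, ∑' c : {p : ℕ × ℕ // g p = n}, F c :=
      Summable.tsum_sigma' (fun n => hFsum.subtype {p | g p = n}) hsig
    rw [e1, e2]
    refine tsum_congr fun n => ?_
    rcases Nat.lt_or_ge n 2 with hn | hn
    · -- n = 0 or 1 : everything vanishes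
      have hzero : ∀ c : {p : ℕ × ℕ // g p = n}, F c = 0 := by
        rintro ⟨⟨d, k⟩, hc⟩
        simp only [hgdef] at hc
        interval_cases n
        · have hk : k = 0 := by
            rcases Nat.pow_eq_zero.mp hc with ⟨h, _⟩
            exact h
          simp [hFdef, hk]
        · rcases Nat.eq_zero_or_pos d with rfl | hd
          · simp [hFdef, hb0]
          · have hk : k = 1 := (Nat.pow_eq_one.mp hc).resolve_right hd.ne'
            simp [hFdef, hk, ArithmeticFunction.vonMangoldt_apply_one]
      rw [tsum_congr hzero, tsum_zero]
      have hΛ : ArithmeticFunction.vonMangoldt n = 0 := by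
        interval_cases n
        · simp
        · simp
      rw [hΛ]
      push_cast
      rw [zero_pow hm0, zero_div]
    · -- n ≥ 2 : finite fiber
      have hfib : ∑' c : {p : ℕ × ℕ // g p = n}, F c = ∑ p ∈ Sfib n, F p := by
        rw [tsum_congr_subtype F (fun p => (mem_Sfib hn).symm : ∀ p, g p = n ↔ p ∈ Sfib n)]
        exact Finset.tsum_subtype (Sfib n) F
      rw [hfib]
      have hsplit : ∀ p ∈ Sfib n, F p = (bFun m p.1 *
          ((ArithmeticFunction.vonMangoldt p.2 : ℂ) * (Real.log p.2 : ℂ) ^ (m - 1))) /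
            (n : ℂ) ^ s := by
        intro p hp
        have h := (mem_Sfib hn).mp hp
        simp only [hFdef]
        rw [cpow_nat_mul' p.2 p.1 s, h]
        ring
      rw [Finset.sum_congr rfl hsplit, ← Finset.sum_div, fiber_sum m hm hn]
  exact ⟨partA, partB, partC, step2.symm.trans step1.symm⟩
end
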